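/- Let d, n be positive integers, let V₀ and V be symmetric positive definite d×d real matrices with V ⪰ V₀ in the Loewner order, let Δ₀ ∈ ℝ^{d×n} and S ∈ ℝ^{d×n}, and let Δ = V⁻¹ (V₀ Δ₀ + S). Then √(Tr(Δᵀ V Δ)) ≤ √(Tr(Sᵀ V⁻¹ S)) + √(Tr(Δ₀ᵀ V₀ Δ₀)). -/

import Mathlib

open Matrix

section Aux

variable {m k : Type*} [Fintype m] [Fintype k] [DecidableEq m]

lemma psd_trace_nonneg {M : Matrix m m ℝ} (h : M.PosSemidef) :
    0 ≤ M.trace := by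
  have hdiag : ∀ i, 0 ≤ M i i := by
    intro i
    exact h.diag_nonneg
  exact Finset.sum_nonneg fun i _ => hdiag i

lemma trace_transpose_mul_self (N : Matrix m k ℝ) :
    Matrix.trace (Nᵀ * N) = ∑ p : k × m, (N p.2 p.1) ^ 2 := by
  simp [Matrix.trace, Matrix.diag, Matrix.mul_apply, Fintype.sum_prod_type, sq]

/-- A matrix viewed as a vector in Euclidean space. -/
def matVec (N : Matrix m k ℝ) : EuclideanSpace ℝ (k × m) :=
  WithLp.toLp 2 (fun p : k × m => N p.2 p.1)

lemma matVec_add (N₁ N₂ : Matrix m k ℝ) : matVec (N₁ + N₂) = matVec N₁ + matVec N₂ := by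
  ext p
  simp [matVec]

lemma sqrt_trace_eq_norm (N : Matrix m k ℝ) :
    Real.sqrt (Matrix.trace (Nᵀ * N)) = ‖matVec N‖ := by
  rw [trace_transpose_mul_self]
  have h := EuclideanSpace.norm_eq (𝕜 := ℝ) (matVec N)
  refine Eq.trans ?_ h.symm
  congr 1
  refine Finset.sum_congr rfl fun p _ => ?_
  simp [matVec, Real.norm_eq_abs, sq_abs]

open scoped MatrixOrder in
/-- Triangle inequality for the weighted Frobenius seminorm `√(Tr(AᵀWA))`. -/
lemma weighted_tri {W : Matrix m m ℝ} (hW : W.PosSemidef) (A B : Matrix m k ℝ) :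
    Real.sqrt (Matrix.trace ((A + B)ᵀ * W * (A + B)))
      ≤ Real.sqrt (Matrix.trace (Aᵀ * W * A))
        + Real.sqrt (Matrix.trace (Bᵀ * W * B)) := by
  set C := CFC.sqrt W with hC
  have hCsymm : Cᵀ = C := by
    have := (CFC.sqrt_nonneg W).posSemidef.isHermitian
    rwa [Matrix.IsHermitian, Matrix.conjTranspose_eq_transpose_of_trivial] at this
  have hCC : C * C = W := CFC.sqrt_mul_sqrt_self W hW.nonneg
  have key : ∀ N : Matrix m k ℝ, Nᵀ * W * N = (C * N)ᵀ * (C * N) := by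
    intro N
    rw [Matrix.transpose_mul, hCsymm, ← hCC]
    simp only [Matrix.mul_assoc]
  have hnorm : ∀ N : Matrix m k ℝ,
      Real.sqrt (Matrix.trace (Nᵀ * W * N)) = ‖matVec (C * N)‖ := by
    intro N
    rw [key, sqrt_trace_eq_norm]
  rw [hnorm, hnorm, hnorm]
  rw [Matrix.mul_add, matVec_add]
  exact norm_add_le _ _

end Aux

/-- For symmetric positive definite `V₀ ⪯ V` and
`Δ = V⁻¹ (V₀ Δ₀ + S)`, the weighted error satisfies the triangle-type bound
`√(Tr(Δᵀ V Δ)) ≤ √(Tr(Sᵀ V⁻¹ S)) + √(Tr(Δ₀ᵀ V₀ Δ₀))`. -/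
theorem stmt4 (d n : ℕ) (hd : 0 < d) (hn : 0 < n)
    (V₀ V : Matrix (Fin d) (Fin d) ℝ) (hV₀ : V₀.PosDef) (hV : V.PosDef)
    (hle : (V - V₀).PosSemidef)
    (Δ₀ S : Matrix (Fin d) (Fin n) ℝ) :
    Real.sqrt (Matrix.trace ((V⁻¹ * (V₀ * Δ₀ + S))ᵀ * V * (V⁻¹ * (V₀ * Δ₀ + S))))
      ≤ Real.sqrt (Matrix.trace (Sᵀ * V⁻¹ * S))
        + Real.sqrt (Matrix.trace (Δ₀ᵀ * V₀ * Δ₀)) := by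
  have hVsymm : Vᵀ = V := by
    have := hV.isHermitian
    rwa [Matrix.IsHermitian, Matrix.conjTranspose_eq_transpose_of_trivial] at this
  have hV₀symm : V₀ᵀ = V₀ := by
    have := hV₀.isHermitian
    rwa [Matrix.IsHermitian, Matrix.conjTranspose_eq_transpose_of_trivial] at this
  have hVdet : IsUnit V.det := isUnit_iff_ne_zero.2 (ne_of_gt hV.det_pos)
  have hV₀det : IsUnit V₀.det := isUnit_iff_ne_zero.2 (ne_of_gt hV₀.det_pos)
  have hVV : V * V⁻¹ = 1 := Matrix.mul_nonsing_inv V hVdet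
  have hVV' : V⁻¹ * V = 1 := Matrix.nonsing_inv_mul V hVdet
  have hV₀V₀ : V₀ * V₀⁻¹ = 1 := Matrix.mul_nonsing_inv V₀ hV₀det
  have hV₀V₀' : V₀⁻¹ * V₀ = 1 := Matrix.nonsing_inv_mul V₀ hV₀det
  have hVisymm : (V⁻¹)ᵀ = V⁻¹ := by rw [Matrix.transpose_nonsing_inv, hVsymm]
  have hVi : (V⁻¹).PosDef := hV.inv
  set M : Matrix (Fin d) (Fin n) ℝ := V₀ * Δ₀ + S with hM
  -- Rewrite the LHS matrix as Mᵀ * V⁻¹ * M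
  have hLHS : (V⁻¹ * M)ᵀ * V * (V⁻¹ * M) = Mᵀ * V⁻¹ * M := by
    rw [Matrix.transpose_mul, hVisymm]
    simp only [Matrix.mul_assoc]
    have h1 : V * (V⁻¹ * M) = M := by rw [← Matrix.mul_assoc, hVV, Matrix.one_mul]
    rw [h1]
  rw [hLHS]
  have hM' : M = S + V₀ * Δ₀ := by rw [hM, add_comm]
  rw [hM']
  have tri := weighted_tri hVi.posSemidef S (V₀ * Δ₀)
  refine tri.trans ?_
  gcongr
  -- It remains: Tr((V₀Δ₀)ᵀ V⁻¹ (V₀Δ₀)) ≤ Tr(Δ₀ᵀ V₀ Δ₀)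
  -- Show V₀ - V₀ V⁻¹ V₀ is PSD
  set C := V - V₀ with hCdef
  have hCsymm : Cᵀ = C := by rw [hCdef, Matrix.transpose_sub, hVsymm, hV₀symm]
  have hCVC : (Cᵀ * V₀⁻¹ * C).PosSemidef := by
    have := Matrix.PosSemidef.conjTranspose_mul_mul_same hV₀.inv.posSemidef C
    simpa [Matrix.conjTranspose_eq_transpose_of_trivial] using this
  have hD : (V * V₀⁻¹ * V - V).PosSemidef := by
    have hid : V * V₀⁻¹ * V - V = Cᵀ * V₀⁻¹ * C + C := by
      rw [hCsymm, hCdef]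
      have expand : (V - V₀) * V₀⁻¹ * (V - V₀)
          = V * V₀⁻¹ * V - V * (V₀⁻¹ * V₀) - (V₀ * V₀⁻¹) * V + V₀ * V₀⁻¹ * V₀ := by
        noncomm_ring
      rw [expand, hV₀V₀', hV₀V₀]
      simp only [Matrix.mul_one, Matrix.one_mul]
      abel
    rw [hid]
    exact hCVC.add hle
  have hDiff : (V₀⁻¹ - V⁻¹).PosSemidef := by
    have hid : V₀⁻¹ - V⁻¹ = (V⁻¹)ᵀ * (V * V₀⁻¹ * V - V) * V⁻¹ := by
      rw [hVisymm]
      have expand : V⁻¹ * (V * V₀⁻¹ * V - V) * V⁻¹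
          = (V⁻¹ * V) * V₀⁻¹ * (V * V⁻¹) - V⁻¹ * (V * V⁻¹) := by noncomm_ring
      rw [expand, hVV, hVV']
      simp only [Matrix.mul_one, Matrix.one_mul]
    rw [hid]
    have := Matrix.PosSemidef.conjTranspose_mul_mul_same hD (V⁻¹)
    simpa [Matrix.conjTranspose_eq_transpose_of_trivial] using this
  have hX : (V₀ - V₀ * V⁻¹ * V₀).PosSemidef := by
    have hid : V₀ - V₀ * V⁻¹ * V₀ = V₀ᵀ * (V₀⁻¹ - V⁻¹) * V₀ := by
      rw [hV₀symm]
      have expand : V₀ * (V₀⁻¹ - V⁻¹) * V₀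
          = (V₀ * V₀⁻¹) * V₀ - V₀ * V⁻¹ * V₀ := by noncomm_ring
      rw [expand, hV₀V₀]
      simp only [Matrix.mul_one, Matrix.one_mul]
    rw [hid]
    have := Matrix.PosSemidef.conjTranspose_mul_mul_same hDiff V₀
    simpa [Matrix.conjTranspose_eq_transpose_of_trivial] using this
  have hfinal : (Δ₀ᵀ * (V₀ - V₀ * V⁻¹ * V₀) * Δ₀).PosSemidef := by
    have := Matrix.PosSemidef.conjTranspose_mul_mul_same hX Δ₀
    simpa [Matrix.conjTranspose_eq_transpose_of_trivial] using this
  have htr := psd_trace_nonneg hfinal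
  have hrewrite : (V₀ * Δ₀)ᵀ * V⁻¹ * (V₀ * Δ₀) = Δ₀ᵀ * (V₀ * V⁻¹ * V₀) * Δ₀ := by
    rw [Matrix.transpose_mul, hV₀symm]
    simp only [Matrix.mul_assoc]
  rw [hrewrite]
  have hsplit : Δ₀ᵀ * (V₀ - V₀ * V⁻¹ * V₀) * Δ₀
      = Δ₀ᵀ * V₀ * Δ₀ - Δ₀ᵀ * (V₀ * V⁻¹ * V₀) * Δ₀ := by
    simp only [Matrix.mul_sub, Matrix.sub_mul]
  rw [hsplit] at htr
  rw [Matrix.trace_sub] at htr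
  linarith
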